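/- For every natural number n ≥ 5, setting k = ⌈log_2 n⌉ − 2 and η = 5/2 − 55/(6e^2), it holds that sum_{i=1}^{n} [ i·2^{−k}·(1 − 2^{−k})^{i−1} + (1 − 2^{−k})^i − (1 − 2^{−(k−1)})^i − i·2^{−k}·(1 − 2^{−(k−1)})^{i−1} ] ≥ η·2^{k−1}. -/

import Mathlib

lemma sum_closed (p : ℝ) (hp : p ≠ 0) (n : ℕ) :
    ∑ i ∈ Finset.Icc 1 n,
      ((i : ℝ) * p * (1 - p) ^ (i - 1) + (1 - p) ^ i
        - (1 - 2 * p) ^ i - (i : ℝ) * p * (1 - 2 * p) ^ (i - 1))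
    = (5 - 4 * (1 - p) ^ n * (2 + ((n : ℝ) - 1) * p)
        + (1 - 2 * p) ^ n * (3 + (2 * (n : ℝ) - 4) * p)) / (4 * p) := by
  induction n with
  | zero => simp; field_simp; ring
  | succ m ih =>
    rw [Finset.sum_Icc_succ_top (Nat.le_add_left 1 m), ih]
    simp only [Nat.add_sub_cancel]
    push_cast
    field_simp
    ring

theorem alpha_k_ge (n : ℕ) (hn : 5 ≤ n) (k : ℤ) (η : ℝ)
    (hk : k = ⌈Real.logb 2 n⌉ - 2)
    (hη : η = 5 / 2 - 55 / (6 * Real.exp 1 ^ 2)) :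
    ∑ i ∈ Finset.Icc 1 n,
        ((i : ℝ) * (2 : ℝ) ^ (-k) * (1 - (2 : ℝ) ^ (-k)) ^ (i - 1)
          + (1 - (2 : ℝ) ^ (-k)) ^ i
          - (1 - (2 : ℝ) ^ (-k + 1)) ^ i
          - (i : ℝ) * (2 : ℝ) ^ (-k) * (1 - (2 : ℝ) ^ (-k + 1)) ^ (i - 1))
      ≥ η * (2 : ℝ) ^ (k - 1) := by
  have hnR : (5 : ℝ) ≤ (n : ℝ) := by exact_mod_cast hn
  have hn0 : (0 : ℝ) < n := by linarith
  -- k ≥ 1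
  have hlog : (2 : ℝ) < Real.logb 2 n := by
    rw [Real.lt_logb_iff_rpow_lt one_lt_two hn0]
    have : (2 : ℝ) ^ (2 : ℝ) = 4 := by
      rw [show (2 : ℝ) = ((2 : ℕ) : ℝ) by norm_num, Real.rpow_natCast]
      norm_num
    rw [this]; linarith
  have hk1 : 1 ≤ k := by
    have : (2 : ℤ) < ⌈Real.logb 2 n⌉ := by
      rw [Int.lt_ceil]; exact_mod_cast hlog
    omega
  set p : ℝ := (2 : ℝ) ^ (-k) with hp_def
  have hp0 : 0 < p := by positivity
  have hp : p ≠ 0 := ne_of_gt hp0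
  -- rewrite 2^(-k+1) = 2 * p
  have h2p : (2 : ℝ) ^ (-k + 1) = 2 * p := by
    rw [hp_def, zpow_add₀ (by norm_num : (2:ℝ) ≠ 0) (-k) 1, zpow_one]
    ring
  -- p ≤ 1/2
  have hphalf : p ≤ 1 / 2 := by
    have : p ≤ (2 : ℝ) ^ (-1 : ℤ) := by
      apply zpow_le_zpow_right₀ one_le_two
      omega
    simpa using this
  -- n * p ≥ 2
  have hnp : 2 ≤ (n : ℝ) * p := by
    have hceil : ((⌈Real.logb 2 n⌉ : ℤ) : ℝ) - 1 < Real.logb 2 n := by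
      have := Int.ceil_lt_add_one (Real.logb 2 n)
      linarith
    have hkx : ((k : ℝ) + 1) ≤ Real.logb 2 n := by
      rw [hk]; push_cast; linarith
    have h1 : (2 : ℝ) ^ (k + 1) ≤ (n : ℝ) := by
      calc (2 : ℝ) ^ (k + 1) = (2 : ℝ) ^ (((k + 1 : ℤ) : ℝ)) := by
            rw [Real.rpow_intCast]
        _ ≤ (2 : ℝ) ^ (Real.logb 2 n) := by
            apply Real.rpow_le_rpow_of_exponent_le one_le_two
            push_cast; linarith
        _ = n := Real.rpow_logb two_pos (by norm_num) hn0
    have h2 : (2 : ℝ) ^ (k + 1) * p = 2 := by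
      rw [hp_def, ← zpow_add₀ (two_ne_zero : (2:ℝ) ≠ 0)]
      norm_num
    calc (2 : ℝ) = (2 : ℝ) ^ (k + 1) * p := h2.symm
      _ ≤ (n : ℝ) * p := by
          apply mul_le_mul_of_nonneg_right h1 (le_of_lt hp0)
  -- closed form
  rw [show (∑ i ∈ Finset.Icc 1 n,
        ((i : ℝ) * (2 : ℝ) ^ (-k) * (1 - (2 : ℝ) ^ (-k)) ^ (i - 1)
          + (1 - (2 : ℝ) ^ (-k)) ^ i
          - (1 - (2 : ℝ) ^ (-k + 1)) ^ i
          - (i : ℝ) * (2 : ℝ) ^ (-k) * (1 - (2 : ℝ) ^ (-k + 1)) ^ (i - 1)))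
      = ∑ i ∈ Finset.Icc 1 n,
        ((i : ℝ) * p * (1 - p) ^ (i - 1) + (1 - p) ^ i
          - (1 - 2 * p) ^ i - (i : ℝ) * p * (1 - 2 * p) ^ (i - 1)) from by
    apply Finset.sum_congr rfl
    intro i _
    rw [h2p], sum_closed p hp n]
  -- reduce to the numerator inequality
  rw [ge_iff_le, le_div_iff₀ (by positivity : (0:ℝ) < 4 * p)]
  have hpow2 : (2 : ℝ) ^ (k - 1) * (4 * p) = 2 := by
    rw [hp_def, show (4 : ℝ) = (2 : ℝ) ^ (2 : ℤ) by norm_num,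
      ← zpow_add₀ (two_ne_zero : (2:ℝ) ≠ 0), ← zpow_add₀ (two_ne_zero : (2:ℝ) ≠ 0),
      show k - 1 + (2 + -k) = 1 by ring]
    norm_num
  rw [mul_assoc, hpow2]
  -- main estimate
  have he : (0 : ℝ) < Real.exp 1 := Real.exp_pos 1
  set t : ℝ := (n : ℝ) * p with ht_def
  have hA : (1 - p) ^ n ≤ Real.exp (-t) := by
    have h1 : (1 - p) ^ n ≤ (Real.exp (-p)) ^ n := by
      apply pow_le_pow_left₀ (by linarith)
      linarith [Real.add_one_le_exp (-p)]
    calc (1 - p) ^ n ≤ (Real.exp (-p)) ^ n := h1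
      _ = Real.exp (-t) := by
          rw [← Real.exp_nat_mul]; ring_nf; rw [ht_def]
  have hB : (0 : ℝ) ≤ (1 - 2 * p) ^ n * (3 + (2 * (n : ℝ) - 4) * p) := by
    apply mul_nonneg
    · apply pow_nonneg; linarith
    · nlinarith
  -- exp(-t)*(2+t) ≤ 4*exp(-2) for t ≥ 2
  have hkey : Real.exp (-t) * (2 + t) ≤ 4 * Real.exp (-2) := by
    have h1 : 2 + t ≤ 4 * Real.exp (t - 2) := by
      nlinarith [Real.add_one_le_exp (t - 2)]
    have h2 : Real.exp (-t) * Real.exp (t - 2) = Real.exp (-2) := by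
      rw [← Real.exp_add]; ring_nf
    calc Real.exp (-t) * (2 + t) ≤ Real.exp (-t) * (4 * Real.exp (t - 2)) := by
          apply mul_le_mul_of_nonneg_left h1 (Real.exp_nonneg _)
      _ = 4 * Real.exp (-2) := by rw [← h2]; ring
  have h16 : 16 * Real.exp (-2) ≤ 55 / (3 * Real.exp 1 ^ 2) := by
    have hsq : Real.exp 1 ^ 2 = Real.exp 2 := by
      rw [← Real.exp_nat_mul]; norm_num
    rw [hsq, Real.exp_neg, le_div_iff₀ (by positivity)]
    rw [show (16:ℝ) * (Real.exp 2)⁻¹ * (3 * Real.exp 2)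
        = 48 * ((Real.exp 2)⁻¹ * Real.exp 2) by ring,
      inv_mul_cancel₀ (ne_of_gt (Real.exp_pos 2))]
    norm_num
  have hmain : 4 * (1 - p) ^ n * (2 + ((n : ℝ) - 1) * p) ≤ 55 / (3 * Real.exp 1 ^ 2) := by
    have hAnn : (0:ℝ) ≤ (1 - p) ^ n := pow_nonneg (by linarith) n
    have hc1 : 2 + ((n : ℝ) - 1) * p ≤ 2 + t := by
      rw [ht_def]; nlinarith
    have hc2 : (1 - p) ^ n * (2 + ((n : ℝ) - 1) * p) ≤ Real.exp (-t) * (2 + t) := by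
      apply mul_le_mul hA hc1 (by nlinarith) (Real.exp_nonneg _)
    nlinarith
  have hη2 : η * 2 = 5 - 55 / (3 * Real.exp 1 ^ 2) := by
    rw [hη]; field_simp; ring
  rw [hη2]
  linarith
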